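/- Let B₀ be a traceless symmetric 2×2 real matrix, H a real number, J the standard rotation by π/2 (J² = -Id, J skew-symmetric), and B = B₀ + H·Id. Then (Id + BJ)(Id - JB) = (1 + λ² + H²)·Id + 2(H·Id - J)B₀, where λ² = -det(B₀) is determined by B₀² = λ²·Id. In particular the traceless part of (Id + BJ)(Id - JB) equals 2(H·Id - J)B₀. -/

import Mathlib

/-- For a traceless symmetric `B₀`, `J` the rotation by `π/2`, `B = B₀ + H·Id` and
`λ² = -det B₀` (so `B₀² = λ²·Id`), one has
`(Id + BJ)(Id - JB) = (1 + λ² + H²)·Id + 2(H·Id - J)B₀`, and `(H·Id - J)B₀` is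
traceless, so the traceless part of the left-hand side is `2(H·Id - J)B₀`. -/
theorem stmt10 (B₀ : Matrix (Fin 2) (Fin 2) ℝ) (hsym : B₀.IsSymm)
    (htr : B₀.trace = 0) (H : ℝ) :
    B₀ * B₀ = (-B₀.det) • (1 : Matrix (Fin 2) (Fin 2) ℝ) ∧
    (1 + (B₀ + H • (1 : Matrix (Fin 2) (Fin 2) ℝ)) * !![0, -1; 1, 0]) *
        (1 - !![0, -1; 1, 0] * (B₀ + H • (1 : Matrix (Fin 2) (Fin 2) ℝ))) =
      (1 + (-B₀.det) + H ^ 2) • (1 : Matrix (Fin 2) (Fin 2) ℝ) +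
        (2 : ℝ) • ((H • (1 : Matrix (Fin 2) (Fin 2) ℝ) - !![0, -1; 1, 0]) * B₀) ∧
    ((H • (1 : Matrix (Fin 2) (Fin 2) ℝ) - !![0, -1; 1, 0]) * B₀).trace = 0 := by
  have hb : B₀ 1 0 = B₀ 0 1 := by
    have h := hsym.apply 1 0; exact h.symm
  have ha : B₀ 1 1 = -B₀ 0 0 := by
    have : B₀ 0 0 + B₀ 1 1 = 0 := by
      simpa [Matrix.trace, Matrix.diag, Fin.sum_univ_two] using htr
    linarith
  refine ⟨?_, ?_, ?_⟩
  · ext i j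
    fin_cases i <;> fin_cases j <;>
      simp [Matrix.mul_apply, Fin.sum_univ_two, Matrix.det_fin_two, Matrix.one_apply, hb, ha] <;>
      ring
  · ext i j
    fin_cases i <;> fin_cases j <;>
      simp [Matrix.mul_apply, Fin.sum_univ_two, Matrix.det_fin_two, Matrix.one_apply,
        Matrix.add_apply, Matrix.sub_apply, Matrix.smul_apply, Matrix.vecMul, dotProduct, Matrix.vecHead, Matrix.vecTail, hb, ha] <;>
      ring
  · simp [Matrix.trace, Matrix.diag, Fin.sum_univ_two, Matrix.mul_apply, Matrix.one_apply,
      hb, ha]
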